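/- For β ≥ 1, σ > 0, μ > 0, α > 1, the function g₁(y) = -α(y/σ)^β + (α-1)((y+μ)/σ)^β takes finite values and the integral ∫₀^∞ exp(g₁(y)) dy is finite. -/

import Mathlib

open MeasureTheory

/-- For β ≥ 1, σ > 0, μ > 0, α > 1, the function
g₁(y) = -α(y/σ)^β + (α-1)((y+μ)/σ)^β takes finite (real) values and
∫₀^∞ exp(g₁(y)) dy is finite, i.e. exp ∘ g₁ is integrable on (0,∞). -/
theorem stmt_3 (β σ μ α : ℝ) (hβ : 1 ≤ β) (hσ : 0 < σ) (hμ : 0 < μ) (hα : 1 < α) :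
    IntegrableOn
      (fun y : ℝ => Real.exp (-α * (y / σ) ^ β + (α - 1) * ((y + μ) / σ) ^ β))
      (Set.Ioi 0) := by
  have hβ0 : (0:ℝ) < β := lt_of_lt_of_le one_pos hβ
  have hα1 : (0:ℝ) < α - 1 := by linarith
  have hr : (1:ℝ) < (α - 1/2) / (α - 1) := by
    rw [lt_div_iff₀ hα1]; linarith
  set c : ℝ := ((α - 1/2) / (α - 1)) ^ (β⁻¹) with hc_def
  have hc1 : 1 < c := by
    rw [hc_def, Real.one_lt_rpow_iff_of_pos (by linarith)]
    exact Or.inl ⟨hr, by positivity⟩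
  have hcβ : c ^ β = (α - 1/2) / (α - 1) :=
    Real.rpow_inv_rpow (by linarith) hβ0.ne'
  -- continuity
  have hcont : Continuous (fun y : ℝ =>
      Real.exp (-α * (y / σ) ^ β + (α - 1) * ((y + μ) / σ) ^ β)) := by
    apply Real.continuous_exp.comp
    apply Continuous.add
    · exact continuous_const.mul ((Real.continuous_rpow_const hβ0.le).comp
        (continuous_id.div_const σ))
    · exact continuous_const.mul ((Real.continuous_rpow_const hβ0.le).comp
        ((continuous_id.add continuous_const).div_const σ))
  refine integrable_of_isBigO_exp_neg (b := 1/(2*σ)) (by positivity)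
    hcont.continuousOn ?_
  apply Asymptotics.IsBigO.of_bound 1
  filter_upwards [Filter.eventually_ge_atTop σ,
    Filter.eventually_ge_atTop (μ / (c - 1))] with y hy1 hy2
  have hy0 : 0 < y := lt_of_lt_of_le hσ hy1
  have ht1 : 1 ≤ y / σ := (one_le_div hσ).mpr hy1
  have ht0 : 0 ≤ y / σ := by positivity
  -- key inequality: y + μ ≤ c * y
  have hyc : y + μ ≤ c * y := by
    have : μ ≤ (c - 1) * y := by
      rw [← div_le_iff₀' (by linarith : (0:ℝ) < c - 1)] at *
      exact hy2
    linarith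
  have hstep : ((y + μ) / σ) ^ β ≤ c ^ β * (y / σ) ^ β := by
    rw [← Real.mul_rpow (by linarith) ht0]
    apply Real.rpow_le_rpow (by positivity) _ hβ0.le
    rw [div_le_iff₀ hσ, mul_assoc, div_mul_cancel₀ _ hσ.ne']
    exact hyc
  have hg : -α * (y / σ) ^ β + (α - 1) * ((y + μ) / σ) ^ β ≤ -(1/2) * (y / σ) ^ β := by
    have h2 : (α - 1) * ((y + μ) / σ) ^ β ≤ (α - 1/2) * (y / σ) ^ β := by
      calc (α - 1) * ((y + μ) / σ) ^ β ≤ (α - 1) * (c ^ β * (y / σ) ^ β) := by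
            exact mul_le_mul_of_nonneg_left hstep hα1.le
        _ = (α - 1/2) * (y / σ) ^ β := by
            rw [hcβ]; field_simp
    linarith
  have hpow : y / σ ≤ (y / σ) ^ β := by
    calc y / σ = (y / σ) ^ (1:ℝ) := (Real.rpow_one _).symm
      _ ≤ (y / σ) ^ β := Real.rpow_le_rpow_of_exponent_le ht1 hβ
  have hfin : -α * (y / σ) ^ β + (α - 1) * ((y + μ) / σ) ^ β ≤ -(1/(2*σ)) * y := by
    have : -(1/2) * (y / σ) ^ β ≤ -(1/(2*σ)) * y := by
      have : (1/(2*σ)) * y ≤ (1/2) * (y / σ) ^ β := by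
        calc (1/(2*σ)) * y = (1/2) * (y / σ) := by field_simp
          _ ≤ (1/2) * (y / σ) ^ β := by linarith
      linarith
    linarith
  rw [Real.norm_eq_abs, Real.norm_eq_abs, abs_of_pos (Real.exp_pos _),
    abs_of_pos (Real.exp_pos _), one_mul]
  exact Real.exp_le_exp.mpr hfin
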